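/- arXiv:2401.11810 — 2 statements merged into one kernel-verified Lean document; each statement's English description precedes it below -/
import Mathlib

section
/- In multiclass classification with 0-1 nonconformity score, if the corrected training accuracy satisfies P̂_tr ≥ n_α/n_cal + β/√n_tr, then the normalized expected CP set size satisfies Λ/|𝒴| ≤ 1/|𝒴| + (1 − 1/|𝒴|)·exp(−n_cal · d_KL(n_α/n_cal || P̂_tr − β/√n_tr)). This follows by instantiating the general bound ∫_{R_min}^{R_max} e^{−n_cal d_KL(n_α/n_cal || F̂(r) − β/√n_tr)} γ(r) dr + γ(R_min)R_min with the discrete score taking values {0,1}, γ(0) = 1/|𝒴|, γ(1) = 1 − 1/|𝒴|, F̂(0) = 0, F̂(1) = P̂_tr, and R_min = 0. -/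
/-- The cdf of a binomial random variable: `P[Bin(m,p) ≤ k]`. -/
noncomputable def binomCdf (m k : ℕ) (p : ℝ) : ℝ :=
  ∑ j ∈ Finset.range (k + 1), (m.choose j : ℝ) * p ^ j * (1 - p) ^ (m - j)

/-- The binary Kullback–Leibler divergence `d_KL(a‖b)`. -/
noncomputable def dKL (a b : ℝ) : ℝ :=
  a * Real.log (a / b) + (1 - a) * Real.log ((1 - a) / (1 - b))

/-- Tilting bound -/
lemma tilt (n k : ℕ) (hk : k ≤ n) (p t : ℝ) (ht0 : 0 ≤ t) (ht1 : t ≤ 1)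
    (hp0 : 0 ≤ p) (hp1 : p ≤ 1) :
    t ^ k * binomCdf n k p ≤ (p * t + (1 - p)) ^ n := by
  unfold binomCdf
  rw [Finset.mul_sum]
  calc ∑ j ∈ Finset.range (k+1), t ^ k * ((n.choose j : ℝ) * p ^ j * (1-p) ^ (n-j))
      ≤ ∑ j ∈ Finset.range (k+1), (n.choose j : ℝ) * (p*t) ^ j * (1-p) ^ (n-j) := by
        apply Finset.sum_le_sum
        intro j hj
        have hjk : j ≤ k := Nat.lt_succ_iff.mp (Finset.mem_range.mp hj)
        have htk : t ^ k ≤ t ^ j := pow_le_pow_of_le_one ht0 ht1 hjk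
        have h1p : (0:ℝ) ≤ 1 - p := by linarith
        have h1 : (0:ℝ) ≤ (n.choose j : ℝ) * p ^ j * (1-p) ^ (n-j) :=
          mul_nonneg (mul_nonneg (by positivity) (pow_nonneg hp0 _)) (pow_nonneg h1p _)
        calc t ^ k * ((n.choose j : ℝ) * p ^ j * (1-p) ^ (n-j))
            ≤ t ^ j * ((n.choose j : ℝ) * p ^ j * (1-p) ^ (n-j)) := by
              exact mul_le_mul_of_nonneg_right htk h1
          _ = (n.choose j : ℝ) * (p*t) ^ j * (1-p) ^ (n-j) := by rw [mul_pow]; ring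
    _ ≤ ∑ j ∈ Finset.range (n+1), (n.choose j : ℝ) * (p*t) ^ j * (1-p) ^ (n-j) := by
        apply Finset.sum_le_sum_of_subset_of_nonneg
        · exact Finset.range_subset_range.mpr (by omega)
        · intro j _ _
          have h1p : (0:ℝ) ≤ 1 - p := by linarith
          exact mul_nonneg (mul_nonneg (by positivity) (pow_nonneg (mul_nonneg hp0 ht0) _)) (pow_nonneg h1p _)
    _ = (p * t + (1 - p)) ^ n := by
        rw [add_pow]
        apply Finset.sum_congr rfl
        intro j _; ring

lemma chernoff (n k : ℕ) (hn : 0 < n) (hk : k ≤ n) (q p : ℝ)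
    (hq0 : 0 ≤ q) (haq : (k:ℝ)/n ≤ q) (hqp : q ≤ p) (hp1 : p ≤ 1) :
    binomCdf n k p ≤ Real.exp (-(n:ℝ) * dKL ((k:ℝ)/n) q) := by
  have hnR : (0:ℝ) < n := Nat.cast_pos.mpr hn
  have hq1 : q ≤ 1 := le_trans hqp hp1
  have hp0 : 0 ≤ p := le_trans hq0 hqp
  rcases eq_or_lt_of_le hq1 with hq1e | hq1lt
  · -- q = 1, hence p = 1
    have hpe : p = 1 := le_antisymm hp1 (hq1e ▸ hqp)
    rcases eq_or_lt_of_le hk with hke | hklt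
    · -- k = n
      have ha : (k:ℝ)/n = 1 := by rw [hke]; exact div_self (ne_of_gt hnR)
      have hd : dKL ((k:ℝ)/n) q = 0 := by
        rw [ha, hq1e]; unfold dKL; simp
      rw [hd, mul_zero, Real.exp_zero]
      have h1 := tilt n k hk p 1 zero_le_one le_rfl hp0 hp1
      rw [one_pow, one_mul] at h1
      calc binomCdf n k p ≤ (p * 1 + (1 - p)) ^ n := h1
        _ = 1 := by rw [show p * 1 + (1 - p) = 1 by ring, one_pow]
    · -- k < n : binomCdf n k 1 = 0
      have hz : binomCdf n k p = 0 := by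
        unfold binomCdf
        apply Finset.sum_eq_zero
        intro j hj
        have hj' : j < k + 1 := Finset.mem_range.mp hj
        have : (1 - p) ^ (n - j) = 0 := by
          rw [hpe]; simp [zero_pow (by omega : n - j ≠ 0)]
        rw [this, mul_zero]
      rw [hz]
      exact le_of_lt (Real.exp_pos _)
  · -- q < 1
    have h1q : 0 < 1 - q := by linarith
    rcases Nat.eq_zero_or_pos k with hke | hkpos
    · -- k = 0
      subst hke
      have hb : binomCdf n 0 p = (1-p)^n := by
        unfold binomCdf; simp
      have ha : ((0:ℕ):ℝ)/n = 0 := by simp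
      have hd0 : dKL 0 q = -Real.log (1-q) := by
        unfold dKL
        rw [zero_mul, zero_add, sub_zero, one_mul, one_div, Real.log_inv]
      have hd : Real.exp (-(n:ℝ) * dKL (((0:ℕ):ℝ)/n) q) = (1-q)^n := by
        rw [ha, hd0, show -(n:ℝ) * -Real.log (1-q) = (n:ℝ) * Real.log (1-q) by ring,
            Real.exp_nat_mul, Real.exp_log h1q]
      rw [hb, hd]
      exact pow_le_pow_left₀ (by linarith) (by linarith) n
    · -- main case : 0 < k, q < 1
      set a : ℝ := (k:ℝ)/n with ha_def
      have ha0 : 0 < a := div_pos (Nat.cast_pos.mpr hkpos) hnR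
      have hka : (n:ℝ) * a = k := by rw [ha_def]; field_simp
      clear_value a
      have hq0' : 0 < q := lt_of_lt_of_le ha0 haq
      have ha1 : a < 1 := lt_of_le_of_lt haq hq1lt
      have h1a : 0 < 1 - a := by linarith
      set t : ℝ := a * (1-q) / (q * (1-a)) with ht_def
      have ht0 : 0 < t := div_pos (mul_pos ha0 h1q) (mul_pos hq0' h1a)
      have ht1 : t ≤ 1 := by
        rw [ht_def, div_le_one (mul_pos hq0' h1a)]
        nlinarith
      clear_value t
      have hmain := tilt n k hk p t (le_of_lt ht0) ht1 hp0 hp1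
      have hqt : q * t + (1 - q) = (1-q)/(1-a) := by
        rw [ht_def]; field_simp; ring
      have hbound : (p * t + (1 - p))^n ≤ ((1-q)/(1-a))^n := by
        apply pow_le_pow_left₀
        · nlinarith
        · nlinarith
      have h2 : binomCdf n k p ≤ ((1-q)/(1-a))^n / t^k := by
        rw [le_div_iff₀ (pow_pos ht0 k)]
        calc binomCdf n k p * t^k = t^k * binomCdf n k p := by ring
          _ ≤ (p*t+(1-p))^n := hmain
          _ ≤ ((1-q)/(1-a))^n := hbound
      have heq : ((1-q)/(1-a))^n / t^k = (q/a)^k * ((1-q)/(1-a))^(n-k) := by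
        rw [div_eq_iff (ne_of_gt (pow_pos ht0 k))]
        have hqat : (q/a) * t = (1-q)/(1-a) := by
          rw [ht_def]; field_simp
        calc ((1-q)/(1-a))^n = ((1-q)/(1-a))^k * ((1-q)/(1-a))^(n-k) := by
              rw [← pow_add, Nat.add_sub_cancel' hk]
          _ = ((q/a)*t)^k * ((1-q)/(1-a))^(n-k) := by rw [hqat]
          _ = (q/a)^k * ((1-q)/(1-a))^(n-k) * t^k := by rw [mul_pow]; ring
      have hexp : Real.exp (-(n:ℝ) * dKL a q) = (q/a)^k * ((1-q)/(1-a))^(n-k) := by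
        have hlog : -(n:ℝ) * dKL a q
            = (k:ℝ) * Real.log (q/a) + ((n-k:ℕ):ℝ) * Real.log ((1-q)/(1-a)) := by
          unfold dKL
          rw [Real.log_div (ne_of_gt ha0) (ne_of_gt hq0'),
              Real.log_div (ne_of_gt h1a) (ne_of_gt h1q),
              Real.log_div (ne_of_gt hq0') (ne_of_gt ha0),
              Real.log_div (ne_of_gt h1q) (ne_of_gt h1a)]
          have hnk : ((n-k:ℕ):ℝ) = (n:ℝ) - (k:ℝ) := by
            push_cast [Nat.cast_sub hk]; ring
          rw [hnk]
          linear_combination (Real.log q - Real.log a + Real.log (1-a)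
            - Real.log (1-q)) * hka
        rw [hlog, Real.exp_add, Real.exp_nat_mul, Real.exp_nat_mul,
            Real.exp_log (div_pos hq0' ha0), Real.exp_log (div_pos h1q h1a)]
      rw [hexp]
      exact h2.trans_eq heq

/-- Multiclass classification with 0-1 score: if the corrected training accuracy satisfies
`P̂_tr ≥ n_α/n_cal + β/√n_tr`, then the normalized expected CP set size satisfies
`Λ/|𝒴| ≤ 1/|𝒴| + (1 − 1/|𝒴|)·exp(−n_cal·d_KL(n_α/n_cal ‖ P̂_tr − β/√n_tr))`.
Here the expected set size is instantiated via the layer-cake representation over the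
two-point score space `{0,1}` with `γ(0)=1/|𝒴|`, `γ(1)=1−1/|𝒴|`, `F̂(0)=0`, `F̂(1)=P̂_tr`,
`R_min = 0`, `p0 = P[Q_{1-α} ≥ 0] ≤ 1`, and
`p1 = P[Q_{1-α} ≥ 1] = P[Bin(n_cal, F(1)) ≤ n_α]` with `F(1) ≥ P̂_tr − β/√n_tr`. -/
theorem stmt_9 (Y ncal ntr : ℕ) (hY : 2 ≤ Y) (hncal : 0 < ncal) (hntr : 0 < ntr)
    (nα : ℕ) (hnα : nα ≤ ncal)
    (β Ptr Λ p0 p1 F1 : ℝ) (hβ : 0 ≤ β) (hPtr : Ptr ∈ Set.Icc (0:ℝ) 1)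
    (hacc : (nα : ℝ) / ncal + β / Real.sqrt ntr ≤ Ptr)
    (hp0 : p0 ≤ 1) (hp00 : 0 ≤ p0)
    (hF1lb : Ptr - β / Real.sqrt ntr ≤ F1) (hF1ub : F1 ≤ 1)
    (hp1 : p1 = binomCdf ncal nα F1)
    (hΛ : Λ / Y = (1 / (Y : ℝ)) * p0 + (1 - 1 / (Y : ℝ)) * p1) :
    Λ / Y ≤ 1 / (Y : ℝ) +
      (1 - 1 / (Y : ℝ)) *
        Real.exp (-(ncal : ℝ) * dKL ((nα : ℝ) / ncal) (Ptr - β / Real.sqrt ntr)) := by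

  set q : ℝ := Ptr - β / Real.sqrt ntr with hq_def
  have hs : 0 < Real.sqrt ntr := Real.sqrt_pos.mpr (Nat.cast_pos.mpr hntr)
  have hb0 : 0 ≤ β / Real.sqrt ntr := div_nonneg hβ hs.le
  have ha0 : 0 ≤ (nα:ℝ)/ncal := by positivity
  have haq : (nα:ℝ)/ncal ≤ q := by rw [hq_def]; linarith
  have hq0 : 0 ≤ q := le_trans ha0 haq
  have hch := chernoff ncal nα hncal hnα q F1 hq0 haq hF1lb hF1ub
  have hY0 : (1:ℝ) ≤ (Y:ℝ) := by exact_mod_cast (by omega : 1 ≤ Y)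
  have h1Y : (0:ℝ) ≤ 1 - 1/(Y:ℝ) := by
    have : 1/(Y:ℝ) ≤ 1 := by
      rw [div_le_one (by linarith)]; linarith
    linarith
  rw [hΛ, hp1]
  exact add_le_add (mul_le_of_le_one_right (by positivity) hp0)
    (mul_le_mul_of_nonneg_left hch h1Y)
end

section
/- (Marginal coverage of split conformal prediction) Let R_1,…,R_m, R_{m+1} be exchangeable real-valued random variables, and let Q_{1−α} be the ⌈(m+1)(1−α)⌉-th smallest value among R_1,…,R_m (equal to +∞ if ⌈(m+1)(1−α)⌉ > m). Then P[R_{m+1} ≤ Q_{1−α}] ≥ 1 − α. -/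
open MeasureTheory
open scoped ENNReal

lemma aux_sorted_le_iff (l : List ℝ) (hl : l.Pairwise (· ≤ ·)) (x : ℝ) (j : ℕ) (hj : j < l.length) :
    x ≤ l[j] ↔ l.countP (fun y => decide (y < x)) ≤ j := by
  induction l generalizing j with
  | nil => simp at hj
  | cons a L ih =>
    rw [List.pairwise_cons] at hl
    obtain ⟨ha, hL⟩ := hl
    rw [List.countP_cons]
    cases j with
    | zero =>
      simp only [List.getElem_cons_zero]
      constructor
      · intro hxa
        have h1 : ¬ (a < x) := not_lt.2 hxa
        have h2 : L.countP (fun y => decide (y < x)) = 0 := by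
          rw [List.countP_eq_zero]
          intro y hy
          simpa using not_lt.2 (hxa.trans (ha y hy))
        simp [h1, h2]
      · intro h
        by_contra hxa
        push_neg at hxa
        simp [hxa] at h
    | succ j =>
      simp only [List.getElem_cons_succ]
      by_cases hax : a < x
      · rw [if_pos (by simpa using hax), ih hL j (by simpa using hj)]
        omega
      · have hx : x ≤ L[j]'(by simpa using hj) :=
          le_trans (not_lt.1 hax) (ha _ (List.getElem_mem _))
        have h2 : L.countP (fun y => decide (y < x)) = 0 := by
          rw [List.countP_eq_zero]
          intro y hy
          simpa using not_lt.2 (le_trans (not_lt.1 hax) (ha y hy))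
        simp [hax, h2, hx]
lemma aux_countP_ge (l : List ℝ) (hl : l.Pairwise (· ≤ ·)) (j : ℕ) (hj : j < l.length) :
    j + 1 ≤ l.countP fun y => decide (y ≤ l[j]) := by
  obtain ⟨t, ht⟩ : ∃ t, l[j] = t := ⟨_, rfl⟩
  have hjt : ∀ i (hi : i < l.length), i ≤ j → l[i] ≤ t := by
    intro i hi hij
    rw [← ht]
    simpa using hl.rel_get_of_le (a := ⟨i, hi⟩) (b := ⟨j, hj⟩) (by simpa using hij)
  rw [ht]
  have hsplit : l.countP (fun y => decide (y ≤ t)) =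
      (l.take (j+1)).countP (fun y => decide (y ≤ t))
      + (l.drop (j+1)).countP (fun y => decide (y ≤ t)) := by
    conv_lhs => rw [← List.take_append_drop (j+1) l]
    rw [List.countP_append]
  have hlen : (l.take (j+1)).length = j + 1 := by
    rw [List.length_take]; omega
  have htake : (l.take (j+1)).countP (fun y => decide (y ≤ t)) = (l.take (j+1)).length := by
    rw [List.countP_eq_length]
    intro a hamem
    obtain ⟨i, hi, rfl⟩ := List.mem_iff_getElem.1 hamem
    rw [List.getElem_take]
    exact decide_eq_true (hjt i (by rw [hlen] at hi; omega) (by rw [hlen] at hi; omega))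
  omega

lemma aux_symm (m : ℕ) (σ : Equiv.Perm (Fin (m+1))) (v : Fin (m+1) → ℝ) :
    (List.ofFn (v ∘ σ) : Multiset ℝ) = (List.ofFn v : Multiset ℝ) := by
  rw [← Fin.univ_val_map, ← Fin.univ_val_map]
  calc Finset.univ.val.map (v ∘ σ) = (Finset.univ.val.map σ).map v := by
        rw [Multiset.map_map]
    _ = Finset.univ.val.map v := by rw [Multiset.map_univ_val_equiv σ]

lemma aux_split (m : ℕ) (v : Fin (m+1) → ℝ) :
    (List.ofFn v : Multiset ℝ)
      = (List.ofFn fun i : Fin m => v i.castSucc : Multiset ℝ) + {v (Fin.last m)} := by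
  rw [List.ofFn_succ' v]
  rw [List.concat_eq_append, ← Multiset.coe_add]
  rfl

lemma aux_countP_sort (M : Multiset ℝ) (p : ℝ → Prop) [DecidablePred p] :
    (M.sort (· ≤ ·)).countP (fun y => decide (p y)) = M.countP p := by
  rw [← Multiset.coe_countP, Multiset.sort_eq]

lemma aux_len_sort (M : Multiset ℝ) : (M.sort (· ≤ ·)).length = Multiset.card M := by
  rw [← Multiset.coe_card, Multiset.sort_eq]

lemma aux_key_iff (m k : ℕ) (hk1 : 1 ≤ k) (h : k - 1 < m) (v : Fin (m+1) → ℝ) :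
    (v (Fin.last m) ≤
      ((List.ofFn fun i : Fin m => v i.castSucc : Multiset ℝ).sort (· ≤ ·))[k-1]'(by
        rw [aux_len_sort]; simpa using h)
    ↔ v (Fin.last m) ≤ ((List.ofFn v : Multiset ℝ).sort (· ≤ ·))[k-1]'(by
        rw [aux_len_sort]; simp; omega)) := by
  set x := v (Fin.last m) with hx
  rw [aux_sorted_le_iff _ (Multiset.pairwise_sort _ _) x (k-1),
      aux_sorted_le_iff _ (Multiset.pairwise_sort _ _) x (k-1)]
  have e1 : ∀ M : Multiset ℝ, (M.sort (· ≤ ·)).countP (fun y => decide (y < x))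
      = M.countP (· < x) := fun M => aux_countP_sort M (· < x)
  rw [e1, e1]
  have e2 : ((List.ofFn v : Multiset ℝ)).countP (· < x) =
      ((List.ofFn fun i : Fin m => v i.castSucc : Multiset ℝ)).countP (· < x) := by
    rw [aux_split, Multiset.countP_add]
    rw [show ({v (Fin.last m)} : Multiset ℝ) = v (Fin.last m) ::ₘ 0 from rfl,
      Multiset.countP_cons]
    simp [hx]
  rw [e2]

lemma aux_count_to_card (m : ℕ) (v : Fin (m+1) → ℝ) (p : ℝ → Prop) [DecidablePred p] :
    (Finset.univ.filter (fun i : Fin (m+1) => p (v i))).card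
      = Multiset.countP p (List.ofFn v : Multiset ℝ) := by
  rw [← Fin.univ_val_map, Multiset.countP_map, Finset.card, Finset.filter_val]

lemma aux_card_ge (m k : ℕ) (hk1 : 1 ≤ k) (h : k - 1 < m) (v : Fin (m+1) → ℝ) :
    k ≤ (Finset.univ.filter (fun i : Fin (m+1) =>
        v i ≤ ((List.ofFn v : Multiset ℝ).sort (· ≤ ·))[k-1]'(by
          rw [aux_len_sort]; simp; omega))).card := by
  have h1 := aux_countP_ge ((List.ofFn v : Multiset ℝ).sort (· ≤ ·))
    (Multiset.pairwise_sort _ _) (k-1) (by rw [aux_len_sort]; simp; omega)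
  rw [aux_countP_sort _ (· ≤ _)] at h1
  rw [aux_count_to_card m v (· ≤ _)]
  omega


lemma aux_g_symm (m k : ℕ) (hb : k - 1 < m + 1) (σ : Equiv.Perm (Fin (m+1))) (v : Fin (m+1) → ℝ) :
    ((List.ofFn (v ∘ σ) : Multiset ℝ).sort (· ≤ ·))[k-1]'(by rw [aux_len_sort]; simpa using hb)
      = ((List.ofFn v : Multiset ℝ).sort (· ≤ ·))[k-1]'(by rw [aux_len_sort]; simpa using hb) := by
  simp only [aux_symm m σ v]

lemma aux_meas (m k : ℕ) (hb : k - 1 < m + 1) :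
    Measurable (fun v : Fin (m+1) → ℝ =>
      ((List.ofFn v : Multiset ℝ).sort (· ≤ ·))[k-1]'(by rw [aux_len_sort]; simpa using hb)) := by
  apply measurable_of_Ici
  intro x
  have hset : (fun v : Fin (m+1) → ℝ =>
        ((List.ofFn v : Multiset ℝ).sort (· ≤ ·))[k-1]'(by rw [aux_len_sort]; simpa using hb))
        ⁻¹' Set.Ici x
      = {v : Fin (m+1) → ℝ | (Finset.univ.filter (fun i => v i < x)).card ≤ k - 1} := by
    ext v
    simp only [Set.mem_preimage, Set.mem_Ici, Set.mem_setOf_eq]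
    rw [aux_sorted_le_iff _ (Multiset.pairwise_sort _ _) x (k-1)
        (by rw [aux_len_sort]; simpa using hb)]
    rw [aux_countP_sort _ (· < x), aux_count_to_card m v (· < x)]
  rw [hset]
  have hmc : Measurable (fun v : Fin (m+1) → ℝ =>
      (Finset.univ.filter (fun i => v i < x)).card) := by
    simp only [Finset.card_filter]
    apply Finset.measurable_sum
    intro i _
    exact Measurable.ite (measurableSet_lt (measurable_pi_apply i) measurable_const)
      measurable_const measurable_const
  exact hmc measurableSet_Iic

open scoped Classical in
/-- Marginal coverage of split conformal prediction: if `R_1,…,R_m,R_{m+1}` are exchangeable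
and `Q_{1-α}` is the `⌈(m+1)(1-α)⌉`-th smallest among `R_1,…,R_m` (`+∞` if
`⌈(m+1)(1-α)⌉ > m`), then `P[R_{m+1} ≤ Q_{1-α}] ≥ 1 - α`. -/
theorem stmt_12 {Ω : Type*} [MeasurableSpace Ω] (μ : Measure Ω) [IsProbabilityMeasure μ]
    (m : ℕ) (hm : 0 < m) (R : Ω → Fin (m + 1) → ℝ) (hmeas : Measurable R)
    (hexch : ∀ σ : Equiv.Perm (Fin (m + 1)),
      Measure.map (fun ω => R ω ∘ σ) μ = Measure.map R μ)
    (α : ℝ) (hα : α ∈ Set.Ioo (0:ℝ) 1)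
    (k : ℕ) (hk : (k : ℤ) = ⌈((m : ℝ) + 1) * (1 - α)⌉) :
    ENNReal.ofReal (1 - α) ≤
      μ {ω | (R ω (Fin.last m) : EReal) ≤
        if h : k - 1 < m then
          ((((List.ofFn fun i : Fin m => R ω i.castSucc : Multiset ℝ).sort
              (· ≤ ·))[k - 1]'(by simpa using h) : ℝ) : EReal)
        else ⊤} := by
  obtain ⟨hα0, hα1⟩ := hα
  have hk1 : 1 ≤ k := by
    have h0 : (0:ℝ) < ((m:ℝ)+1) * (1-α) := by
      apply mul_pos <;> [positivity; linarith]
    have h1 : (0:ℤ) < ⌈((m:ℝ)+1)*(1-α)⌉ := Int.ceil_pos.2 h0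
    omega
  by_cases h : k - 1 < m
  · -- main case
    have hb : k - 1 < m + 1 := by omega
    set g : (Fin (m+1) → ℝ) → ℝ := fun v =>
      ((List.ofFn v : Multiset ℝ).sort (· ≤ ·))[k-1]'(by rw [aux_len_sort]; simpa using hb)
      with hgdef
    have hg : Measurable g := aux_meas m k hb
    set B : Fin (m+1) → Set (Fin (m+1) → ℝ) := fun i => {v | v i ≤ g v} with hBdef
    have hB : ∀ i, MeasurableSet (B i) :=
      fun i => measurableSet_le (measurable_pi_apply i) hg
    set A : Fin (m+1) → Set Ω := fun i => R ⁻¹' (B i) with hAdef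
    have hA : ∀ i, MeasurableSet (A i) := fun i => hmeas (hB i)
    -- rewrite the event
    have hsetEq : {ω | (R ω (Fin.last m) : EReal) ≤
        if h : k - 1 < m then
          ((((List.ofFn fun i : Fin m => R ω i.castSucc : Multiset ℝ).sort
              (· ≤ ·))[k - 1]'(by simpa using h) : ℝ) : EReal)
        else ⊤} = A (Fin.last m) := by
      ext ω
      simp only [Set.mem_setOf_eq, dif_pos h, EReal.coe_le_coe_iff, hAdef, Set.mem_preimage,
        hBdef]
      exact aux_key_iff m k hk1 h (R ω)
    rw [hsetEq]
    -- equal measures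
    have hAeq : ∀ i, μ (A i) = μ (A (Fin.last m)) := by
      intro i
      set σ := Equiv.swap i (Fin.last m) with hσ
      have hmeasσ : Measurable (fun ω => R ω ∘ σ) :=
        measurable_pi_lambda _ (fun j => (measurable_pi_apply (σ j)).comp hmeas)
      have hpre : A i = (fun ω => R ω ∘ σ) ⁻¹' B (Fin.last m) := by
        ext ω
        simp only [hAdef, Set.mem_preimage, hBdef, Set.mem_setOf_eq]
        have hg' : g (R ω ∘ σ) = g (R ω) := aux_g_symm m k hb σ (R ω)
        rw [hg']
        have : (R ω ∘ σ) (Fin.last m) = R ω i := by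
          simp [hσ, Equiv.swap_apply_right]
        rw [this]
      rw [hpre, ← Measure.map_apply hmeasσ (hB (Fin.last m)), hexch σ,
        Measure.map_apply hmeas (hB (Fin.last m))]
    -- sum of measures
    have hpt : ∀ ω, (k : ℝ≥0∞) ≤ ∑ i, (A i).indicator (fun _ => (1:ℝ≥0∞)) ω := by
      intro ω
      have h2 := aux_card_ge m k hk1 h (R ω)
      calc (k:ℝ≥0∞) ≤ ((Finset.univ.filter (fun i => R ω i ≤ g (R ω))).card : ℝ≥0∞) := by
            exact_mod_cast h2
        _ = ∑ i, (A i).indicator (fun _ => (1:ℝ≥0∞)) ω := by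
            rw [Finset.card_filter]
            push_cast
            apply Finset.sum_congr rfl
            intro i _
            by_cases hi : R ω i ≤ g (R ω)
            · rw [if_pos hi]
              exact (Set.indicator_of_mem (show ω ∈ A i from hi) (fun _ => (1:ℝ≥0∞))).symm
            · rw [if_neg hi]
              exact (Set.indicator_of_notMem (show ω ∉ A i from hi) (fun _ => (1:ℝ≥0∞))).symm
    have hsum : (k : ℝ≥0∞) ≤ ∑ i, μ (A i) := by
      have e1 : ∀ i : Fin (m+1), μ (A i) = ∫⁻ ω, (A i).indicator (fun _ => (1:ℝ≥0∞)) ω ∂μ :=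
        fun i => (lintegral_indicator_one (hA i)).symm
      calc (k:ℝ≥0∞) = ∫⁻ _, (k:ℝ≥0∞) ∂μ := by simp
        _ ≤ ∫⁻ ω, ∑ i, (A i).indicator (fun _ => (1:ℝ≥0∞)) ω ∂μ := lintegral_mono hpt
        _ = ∑ i, ∫⁻ ω, (A i).indicator (fun _ => (1:ℝ≥0∞)) ω ∂μ :=
            lintegral_finset_sum _ (fun i _ => measurable_one.indicator (hA i))
        _ = ∑ i, μ (A i) := by simp_rw [← e1]
    have hsum2 : (k : ℝ≥0∞) ≤ ((m:ℝ≥0∞)+1) * μ (A (Fin.last m)) := by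
      calc (k:ℝ≥0∞) ≤ ∑ i, μ (A i) := hsum
        _ = ∑ _i : Fin (m+1), μ (A (Fin.last m)) := Finset.sum_congr rfl (fun i _ => hAeq i)
        _ = ((m:ℝ≥0∞)+1) * μ (A (Fin.last m)) := by
            rw [Finset.sum_const, Finset.card_univ, Fintype.card_fin]
            simp [nsmul_eq_mul]
    -- arithmetic
    have hcr : ((m:ℝ)+1) * (1-α) ≤ (k:ℝ) := by
      have := Int.le_ceil (((m:ℝ)+1) * (1-α))
      rw [← hk] at this
      exact_mod_cast this
    have hfin : ENNReal.ofReal (1-α) * ((m:ℝ≥0∞)+1) ≤ (k:ℝ≥0∞) := by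
      have e : ((m:ℝ≥0∞)+1) = ENNReal.ofReal ((m:ℝ)+1) := by
        rw [ENNReal.ofReal_add (by positivity) (by norm_num)]
        simp [ENNReal.ofReal_natCast]
      rw [e, ← ENNReal.ofReal_mul (by linarith)]
      calc ENNReal.ofReal ((1-α) * ((m:ℝ)+1)) ≤ ENNReal.ofReal (k:ℝ) :=
            ENNReal.ofReal_le_ofReal (by linarith [hcr])
        _ = (k:ℝ≥0∞) := ENNReal.ofReal_natCast k
    have hne0 : ((m:ℝ≥0∞)+1) ≠ 0 := by simp
    have hnetop : ((m:ℝ≥0∞)+1) ≠ ⊤ := by simp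
    have final : ENNReal.ofReal (1-α) * ((m:ℝ≥0∞)+1) ≤ μ (A (Fin.last m)) * ((m:ℝ≥0∞)+1) :=
      calc ENNReal.ofReal (1-α) * ((m:ℝ≥0∞)+1) ≤ (k:ℝ≥0∞) := hfin
        _ ≤ ((m:ℝ≥0∞)+1) * μ (A (Fin.last m)) := hsum2
        _ = μ (A (Fin.last m)) * ((m:ℝ≥0∞)+1) := mul_comm _ _
    exact (ENNReal.mul_le_mul_iff_left hne0 hnetop).1 final
  · -- trivial case
    have hset : {ω | (R ω (Fin.last m) : EReal) ≤
        if h : k - 1 < m then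
          ((((List.ofFn fun i : Fin m => R ω i.castSucc : Multiset ℝ).sort
              (· ≤ ·))[k - 1]'(by simpa using h) : ℝ) : EReal)
        else ⊤} = Set.univ := by
      ext ω
      simp [dif_neg h, le_top]
    rw [hset, measure_univ]
    exact ENNReal.ofReal_le_one.2 (by linarith)
end
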